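/- Let g = (g_0,…,g_p) with each g_ℓ(z) = Σ_{m∈M} γ_{ℓm}B_m(z) a spline in S_d^r(△), and define the theoretical norm ‖g‖² = Σ_{ℓ,ℓ′=0}^p E(X_ℓX_{ℓ′}) ∫_Ω g_ℓ(z)g_{ℓ′}(z) dz. Then, under Assumptions (A3) and (A5), ‖g‖ is equivalent (up to constants independent of g and △) to Σ_{ℓ=0}^p ‖g_ℓ‖_{L²(Ω)}. -/

import Mathlib

noncomputable section
open MeasureTheory Filter

namespace IOSR

/-- partial derivative in the first coordinate -/
def pd1 (g : ℝ × ℝ → ℝ) : ℝ × ℝ → ℝ := fun z => deriv (fun t => g (t, z.2)) z.1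

/-- partial derivative in the second coordinate -/
def pd2 (g : ℝ × ℝ → ℝ) : ℝ × ℝ → ℝ := fun z => deriv (fun t => g (z.1, t)) z.2

/-- mixed partial derivative ∇_{z₁}^i ∇_{z₂}^j g -/
def pdm (i j : ℕ) (g : ℝ × ℝ → ℝ) : ℝ × ℝ → ℝ := pd1^[i] (pd2^[j] g)

/-- supremum norm over a set -/
def supN (Ω : Set (ℝ × ℝ)) (g : ℝ × ℝ → ℝ) : ℝ := ⨆ z ∈ Ω, |g z|

/-- seminorm |g|_{v,∞,Ω} : maximum sup-norm of all v-th order derivatives -/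
def semiN (Ω : Set (ℝ × ℝ)) (v : ℕ) (g : ℝ × ℝ → ℝ) : ℝ :=
  ⨆ i : Fin (v + 1), supN Ω (pdm i (v - (i : ℕ)) g)

/-- full Sobolev-type norm ‖g‖_{v,∞,Ω} (max over all orders up to v) -/
def sobN (Ω : Set (ℝ × ℝ)) (v : ℕ) (g : ℝ × ℝ → ℝ) : ℝ :=
  ⨆ k : Fin (v + 1), semiN Ω k g

/-- a triangle, given by its three vertices -/
structure Triangle where
  A : ℝ × ℝ
  B : ℝ × ℝ
  C : ℝ × ℝ

def Triangle.toSet (T : Triangle) : Set (ℝ × ℝ) := convexHull ℝ {T.A, T.B, T.C}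

def Triangle.vertices (T : Triangle) : Set (ℝ × ℝ) := {T.A, T.B, T.C}

/-- length of the longest edge of a triangle -/
def Triangle.longestEdge (T : Triangle) : ℝ :=
  max (dist T.A T.B) (max (dist T.B T.C) (dist T.A T.C))

/-- inradius: radius of the largest disk inscribed in the triangle -/
def Triangle.inradius (T : Triangle) : ℝ :=
  sSup {r : ℝ | 0 ≤ r ∧ ∃ c : ℝ × ℝ, Metric.closedBall c r ⊆ T.toSet}

/-- a triangulation of a planar domain Ω : a finite collection of nondegenerate
triangles whose union is Ω, such that any nonempty intersection of two distinct
triangles is either a shared vertex or a shared edge. -/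
structure TriangulationOf (Ω : Set (ℝ × ℝ)) where
  tris : Finset Triangle
  nonempty : tris.Nonempty
  nondeg : ∀ T ∈ tris, ¬ Collinear ℝ (Triangle.vertices T)
  covers : ⋃ T ∈ tris, Triangle.toSet T = Ω
  inter : ∀ T ∈ tris, ∀ T' ∈ tris, T ≠ T' →
    (Triangle.toSet T ∩ Triangle.toSet T' = ∅) ∨
    (∃ v ∈ Triangle.vertices T ∩ Triangle.vertices T',
        Triangle.toSet T ∩ Triangle.toSet T' = {v}) ∨
    (∃ u ∈ Triangle.vertices T ∩ Triangle.vertices T',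
     ∃ v ∈ Triangle.vertices T ∩ Triangle.vertices T', u ≠ v ∧
        Triangle.toSet T ∩ Triangle.toSet T' = segment ℝ u v)

/-- the size |Δ| of a triangulation : the length of its longest edge -/
def TriangulationOf.size {Ω : Set (ℝ × ℝ)} (Δ : TriangulationOf Ω) : ℝ :=
  Δ.tris.sup' Δ.nonempty Triangle.longestEdge

/-- π-quasi-uniformity of a triangulation -/
def TriangulationOf.QuasiUniform {Ω : Set (ℝ × ℝ)} (Δ : TriangulationOf Ω) (c : ℝ) : Prop :=
  ∀ T ∈ Δ.tris, Δ.size ≤ c * Triangle.inradius T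

/-- g coincides on S with a bivariate polynomial of total degree at most d -/
def IsPolyOn (d : ℕ) (S : Set (ℝ × ℝ)) (g : ℝ × ℝ → ℝ) : Prop :=
  ∃ q : MvPolynomial (Fin 2) ℝ, q.totalDegree ≤ d ∧
    ∀ z ∈ S, g z = MvPolynomial.eval ![z.1, z.2] q

/-- the spline space S_d^r(Δ) of C^r piecewise polynomials of degree ≤ d over Δ -/
def SplineSpace (Ω : Set (ℝ × ℝ)) (Δ : TriangulationOf Ω) (d r : ℕ) :
    Set ((ℝ × ℝ) → ℝ) :=
  {g | ContDiffOn ℝ r g Ω ∧ ∀ T ∈ Δ.tris, IsPolyOn d (Triangle.toSet T) g}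

/-- the roughness penalty E(g) = ∫_Ω Σ_{i+j=2} (2 choose i) (∇₁^i∇₂^j g)² -/
def energy (Ω : Set (ℝ × ℝ)) (g : ℝ × ℝ → ℝ) : ℝ :=
  ∫ z in Ω, ((pdm 2 0 g z) ^ 2 + 2 * (pdm 1 1 g z) ^ 2 + (pdm 0 2 g z) ^ 2)

/-- energy inner product ⟨g,h⟩_E -/
def energyIP (Ω : Set (ℝ × ℝ)) (g h : ℝ × ℝ → ℝ) : ℝ :=
  ∫ z in Ω, (pdm 2 0 g z * pdm 2 0 h z + 2 * (pdm 1 1 g z * pdm 1 1 h z)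
      + pdm 0 2 g z * pdm 0 2 h z)

/-- U_n = O_P(b_n) : lim_{c → ∞} limsup_n P(|U_n| ≥ c b_n) = 0 -/
def IsBigOP {S : Type*} [MeasurableSpace S] (P : Measure S)
    (U : ℕ → S → ℝ) (b : ℕ → ℝ) : Prop :=
  Tendsto (fun c : ℝ =>
      limsup (fun n => (P {ω | c * b n ≤ |U n ω|}).toReal) atTop) atTop (nhds 0)

/-- U_n = o_P(1) : convergence to zero in probability -/
def IsLittleOP {S : Type*} [MeasurableSpace S] (P : Measure S) (U : ℕ → S → ℝ) : Prop :=
  ∀ ε : ℝ, 0 < ε → Tendsto (fun n => (P {ω | ε ≤ |U n ω|}).toReal) atTop (nhds 0)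

/-- convergence in distribution (weak convergence of laws, tested against
bounded continuous functions) -/
def TendstoInDistribution {S E : Type*} [MeasurableSpace S] [MeasurableSpace E]
    [TopologicalSpace E] (P : Measure S) (X : ℕ → S → E) (μ : Measure E) : Prop :=
  ∀ f : BoundedContinuousFunction E ℝ,
    Tendsto (fun n => ∫ ω, f (X n ω) ∂P) atTop (nhds (∫ x, f x ∂μ))

/-- the standard k-dimensional Gaussian N(0, I_k) -/
def stdGaussian (k : ℕ) : Measure (Fin k → ℝ) :=
  Measure.pi fun _ => ProbabilityTheory.gaussianReal 0 1

end IOSR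


namespace IOSR

open ProbabilityTheory

/-- **Lemma (equivalence of the theoretical norm with the sum of L² norms).**
For g = (g_0,…,g_p) with components in S_d^r(△), under Assumptions (A3) and
(A5), the theoretical norm ‖g‖ (induced by the inner product
⟨g,h⟩ = Σ_{ℓ,ℓ′} E(X_ℓX_{ℓ′}) ∫_Ω g_ℓ h_{ℓ′}) is equivalent, up to constants
independent of g and of the triangulation, to Σ_ℓ ‖g_ℓ‖_{L²(Ω)}. -/
theorem theoretical_norm_equivalence
    (Ωd : Set (ℝ × ℝ)) (p d r : ℕ)
    (S : Type) [MeasurableSpace S] (P : Measure S) [IsProbabilityMeasure P]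
    (X : Fin (p + 1) → S → ℝ)
    (hΩb : Bornology.IsBounded Ωd) (hΩvol : volume Ωd = 1)
    (hX0 : ∀ ω, X 0 ω = 1)
    -- (A3)
    (hA3mom : ∀ ℓ, Integrable (fun ω => |X ℓ ω| ^ (8 : ℕ)) P)
    (cX CX : ℝ) (hcX : 0 < cX)
    (hA3ev : ∀ v : Fin (p + 1) → ℝ,
        (cX * ∑ ℓ, (v ℓ) ^ 2 ≤ ∑ ℓ, ∑ ℓ', v ℓ * v ℓ' * ∫ ω, X ℓ ω * X ℓ' ω ∂P) ∧
        (∑ ℓ, ∑ ℓ', v ℓ * v ℓ' * ∫ ω, X ℓ ω * X ℓ' ω ∂P ≤ CX * ∑ ℓ, (v ℓ) ^ 2))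
    -- (A5): quasi-uniformity constant
    (π₀ : ℝ) (hπ₀ : 0 < π₀) :
    ∃ c C : ℝ, 0 < c ∧ c ≤ C ∧
      ∀ Δ : TriangulationOf Ωd, Δ.QuasiUniform π₀ →
        ∀ g : Fin (p + 1) → (ℝ × ℝ) → ℝ, (∀ ℓ, g ℓ ∈ SplineSpace Ωd Δ d r) →
          (c * ∑ ℓ, Real.sqrt (∫ zz in Ωd, (g ℓ zz) ^ 2) ≤
            Real.sqrt (∑ ℓ, ∑ ℓ', (∫ ω, X ℓ ω * X ℓ' ω ∂P) *
              ∫ zz in Ωd, g ℓ zz * g ℓ' zz)) ∧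
          (Real.sqrt (∑ ℓ, ∑ ℓ', (∫ ω, X ℓ ω * X ℓ' ω ∂P) *
              ∫ zz in Ωd, g ℓ zz * g ℓ' zz) ≤
            C * ∑ ℓ, Real.sqrt (∫ zz in Ωd, (g ℓ zz) ^ 2)) := by
  -- eigenvalue bounds give cX ≤ CX
  have hsum1 : (∑ _ℓ : Fin (p+1), ((1:ℝ)) ^ 2) = ((p:ℝ)+1) := by simp
  have hcC : cX ≤ CX := by
    have h12 := le_trans (hA3ev (fun _ => 1)).1 (hA3ev (fun _ => 1)).2
    rw [hsum1] at h12
    have hp : (0:ℝ) < (p:ℝ)+1 := by positivity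
    exact le_of_mul_le_mul_right h12 hp
  have hCX : 0 < CX := lt_of_lt_of_le hcX hcC
  have hp1 : (0:ℝ) < (p:ℝ)+1 := by positivity
  refine ⟨Real.sqrt (cX / ((p:ℝ)+1)), Real.sqrt CX, Real.sqrt_pos.mpr (by positivity),
    Real.sqrt_le_sqrt (le_trans (div_le_self hcX.le (by linarith)) hcC), ?_⟩
  intro Δ _hQU g hg
  -- Ωd is compact
  have hΩc : IsCompact Ωd := by
    rw [← Δ.covers]
    exact Δ.tris.finite_toSet.isCompact_biUnion (fun T _ =>
      ((Set.finite_singleton _).insert _ |>.insert _).isCompact_convexHull (𝕜 := ℝ))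
  have hcont : ∀ ℓ, ContinuousOn (g ℓ) Ωd := fun ℓ => (hg ℓ).1.continuousOn
  have hInt : ∀ ℓ ℓ', IntegrableOn (fun z => g ℓ z * g ℓ' z) Ωd volume :=
    fun ℓ ℓ' => ((hcont ℓ).mul (hcont ℓ')).integrableOn_compact hΩc
  have hIntSq : ∀ ℓ, IntegrableOn (fun z => (g ℓ z) ^ 2) Ωd volume := by
    intro ℓ; simpa [sq] using hInt ℓ ℓ
  set σ : Fin (p+1) → Fin (p+1) → ℝ := fun ℓ ℓ' => ∫ ω, X ℓ ω * X ℓ' ω ∂P with hσ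
  set Q : ℝ := ∑ ℓ, ∑ ℓ', σ ℓ ℓ' * ∫ zz in Ωd, g ℓ zz * g ℓ' zz with hQ
  set N : Fin (p+1) → ℝ := fun ℓ => Real.sqrt (∫ zz in Ωd, (g ℓ zz) ^ 2) with hN
  have hNnn : ∀ ℓ, 0 ≤ N ℓ := fun ℓ => Real.sqrt_nonneg _
  have hSqnn : ∀ ℓ, 0 ≤ ∫ zz in Ωd, (g ℓ zz) ^ 2 :=
    fun ℓ => integral_nonneg (fun z => sq_nonneg _)
  have hNsq : ∀ ℓ, N ℓ ^ 2 = ∫ zz in Ωd, (g ℓ zz) ^ 2 := fun ℓ => Real.sq_sqrt (hSqnn ℓ)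
  have hSNnn : 0 ≤ ∑ ℓ, N ℓ := Finset.sum_nonneg (fun ℓ _ => hNnn ℓ)
  -- rewrite Q as an integral
  have hQeq : Q = ∫ zz in Ωd, ∑ ℓ, ∑ ℓ', g ℓ zz * g ℓ' zz * σ ℓ ℓ' := by
    rw [integral_finset_sum _ (fun ℓ _ =>
      integrable_finset_sum _ (fun ℓ' _ => (hInt ℓ ℓ').mul_const _))]
    refine Finset.sum_congr rfl (fun ℓ _ => ?_)
    rw [integral_finset_sum _ (fun ℓ' _ => (hInt ℓ ℓ').mul_const _)]
    exact Finset.sum_congr rfl (fun ℓ' _ => by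
      rw [MeasureTheory.integral_mul_const, mul_comm])
  have hIntBig : Integrable (fun zz => ∑ ℓ, ∑ ℓ', g ℓ zz * g ℓ' zz * σ ℓ ℓ')
      (volume.restrict Ωd) :=
    integrable_finset_sum _ (fun ℓ _ =>
      integrable_finset_sum _ (fun ℓ' _ => (hInt ℓ ℓ').mul_const _))
  have hIntSum : Integrable (fun zz => ∑ ℓ, (g ℓ zz) ^ 2) (volume.restrict Ωd) :=
    integrable_finset_sum _ (fun ℓ _ => hIntSq ℓ)
  have hSumInt : (∫ zz in Ωd, ∑ ℓ, (g ℓ zz) ^ 2) = ∑ ℓ, N ℓ ^ 2 := by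
    rw [integral_finset_sum _ (fun ℓ _ => hIntSq ℓ)]
    exact Finset.sum_congr rfl (fun ℓ _ => (hNsq ℓ).symm)
  -- lower bound: cX * ∑ N² ≤ Q
  have hlow : cX * ∑ ℓ, N ℓ ^ 2 ≤ Q := by
    rw [hQeq, ← hSumInt, ← MeasureTheory.integral_const_mul]
    exact integral_mono (hIntSum.const_mul cX) hIntBig
      (fun z => (hA3ev (fun ℓ => g ℓ z)).1)
  -- upper bound: Q ≤ CX * ∑ N²
  have hup : Q ≤ CX * ∑ ℓ, N ℓ ^ 2 := by
    rw [hQeq, ← hSumInt, ← MeasureTheory.integral_const_mul]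
    exact integral_mono hIntBig (hIntSum.const_mul CX)
      (fun z => (hA3ev (fun ℓ => g ℓ z)).2)
  constructor
  · -- lower direction
    have hCS : (∑ ℓ, N ℓ) ^ 2 ≤ ((p:ℝ)+1) * ∑ ℓ, N ℓ ^ 2 := by
      have := sq_sum_le_card_mul_sum_sq (s := Finset.univ) (f := N)
      simpa using this
    have h1 : cX / ((p:ℝ)+1) * (∑ ℓ, N ℓ) ^ 2 ≤ Q := by
      have h2 : cX / ((p:ℝ)+1) * (∑ ℓ, N ℓ) ^ 2
          ≤ cX / ((p:ℝ)+1) * (((p:ℝ)+1) * ∑ ℓ, N ℓ ^ 2) :=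
        mul_le_mul_of_nonneg_left hCS (by positivity)
      have h3 : cX / ((p:ℝ)+1) * (((p:ℝ)+1) * ∑ ℓ, N ℓ ^ 2) = cX * ∑ ℓ, N ℓ ^ 2 := by
        field_simp
      linarith
    calc Real.sqrt (cX / ((p:ℝ)+1)) * ∑ ℓ, N ℓ
        = Real.sqrt (cX / ((p:ℝ)+1) * (∑ ℓ, N ℓ) ^ 2) := by
          rw [Real.sqrt_mul (by positivity), Real.sqrt_sq hSNnn]
      _ ≤ Real.sqrt Q := Real.sqrt_le_sqrt h1
  · -- upper direction
    have hbound : Q ≤ CX * (∑ ℓ, N ℓ) ^ 2 := by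
      have h4 : (∑ ℓ, N ℓ ^ 2) ≤ (∑ ℓ, N ℓ) ^ 2 :=
        Finset.sum_sq_le_sq_sum_of_nonneg (fun ℓ _ => hNnn ℓ)
      have := mul_le_mul_of_nonneg_left h4 hCX.le
      linarith
    calc Real.sqrt Q ≤ Real.sqrt (CX * (∑ ℓ, N ℓ) ^ 2) := Real.sqrt_le_sqrt hbound
      _ = Real.sqrt CX * ∑ ℓ, N ℓ := by
          rw [Real.sqrt_mul hCX.le, Real.sqrt_sq hSNnn]

end IOSR
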